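/- Let x = φ^ω(0) be the fixed point of φ(0)=001, φ(1)=1. Then inrc_x(n) < 2n for all n ≥ 1. -/

import Mathlib

/-- The morphism φ(0)=001, φ(1)=1. -/
def pmor (b : ℕ) : List ℕ := if b = 0 then [0, 0, 1] else [1]

/-- The iterates φ^k(0). -/
def pword : ℕ → List ℕ
  | 0 => [0]
  | (k + 1) => (pword k).flatMap pmor

/-- The fixed point x = φ^ω(0). -/
def pfix (i : ℕ) : ℕ := (pword (i + 1)).getD i 0

/-- The set of `m` such that the first `m` length-`n` factors of `x`
are pairwise distinct; `inrc x n` is its greatest element. -/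
def inrcSet {α : Type*} (x : ℕ → α) (n : ℕ) : Set ℕ :=
  {m | ∀ i < m, ∀ j < m, (∀ d < n, x (i + d) = x (j + d)) → i = j}

lemma pword_succ (k : ℕ) : pword (k + 1) = pword k ++ (pword k ++ [1]) := by
  induction k with
  | zero => rfl
  | succ k ih =>
    show (pword (k + 1)).flatMap pmor = _
    conv_lhs => rw [ih]
    rw [List.flatMap_append, List.flatMap_append]
    rfl

lemma pword_length (k : ℕ) : (pword k).length = 2 ^ (k + 1) - 1 := by
  induction k with
  | zero => rfl
  | succ k ih =>
    rw [pword_succ, List.length_append, List.length_append, ih]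
    have : 1 ≤ 2 ^ (k + 1) := Nat.one_le_two_pow
    simp [pow_succ]
    omega

lemma pword_prefix {a b : ℕ} (h : a ≤ b) : pword a <+: pword b := by
  induction b with
  | zero => rw [Nat.le_zero.mp h]
  | succ b ih =>
    rcases Nat.lt_or_ge a (b + 1) with h' | h'
    · exact (ih (Nat.lt_succ_iff.mp h')).trans (by rw [pword_succ]; exact List.prefix_append _ _)
    · rw [le_antisymm h h']

lemma pfix_eq (K i : ℕ) (h : i < (pword K).length) : pfix i = (pword K).getD i 0 := by
  have hi : i < (pword (i + 1)).length := by
    rw [pword_length]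
    have := Nat.lt_two_pow_self (n := i)
    have : 2 ^ i ≤ 2 ^ (i + 2) := Nat.pow_le_pow_right (by norm_num) (by omega)
    omega
  rcases Nat.le_total K (i + 1) with hK | hK
  · obtain ⟨t, ht⟩ := pword_prefix hK
    show (pword (i + 1)).getD i 0 = _
    rw [← ht, List.getD_append _ _ _ _ h]
  · obtain ⟨t, ht⟩ := pword_prefix hK
    show (pword (i + 1)).getD i 0 = _
    rw [← ht, List.getD_append _ _ _ _ hi]

lemma pfix_shift (k d : ℕ) (hd : d < (pword k).length) :
    pfix ((pword k).length + d) = pfix d := by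
  have hlen : (pword (k + 1)).length = (pword k).length + ((pword k).length + 1) := by
    rw [pword_succ]; simp
  rw [pfix_eq (k + 1) ((pword k).length + d) (by omega),
      pfix_eq k d hd, pword_succ,
      List.getD_append_right _ _ _ _ (Nat.le_add_right _ _)]
  rw [Nat.add_sub_cancel_left, List.getD_append _ _ _ _ hd]

/-- for x = φ^ω(0), inrc_x(n) < 2n for all n ≥ 1
(every element of the inrc set, in particular the maximum, is < 2n). -/
theorem inrc_pfix_lt (n : ℕ) (hn : 1 ≤ n) :
    ∀ m ∈ inrcSet pfix n, m < 2 * n := by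
  intro m hm
  by_contra hle
  push_neg at hle
  set k := Nat.log 2 n with hk
  have h1 : 2 ^ k ≤ n := Nat.pow_log_le_self 2 (by omega)
  have h2 : n < 2 ^ (k + 1) := Nat.lt_pow_succ_log_self (by norm_num) n
  set L := (pword k).length with hL
  have hLval : L = 2 ^ (k + 1) - 1 := pword_length k
  have hnL : n ≤ L := by omega
  have hLm : L < m := by
    have : 2 ^ (k + 1) = 2 * 2 ^ k := by ring
    omega
  have := hm 0 (by omega) L hLm (fun d hd => by
    rw [Nat.zero_add, (pfix_shift k d (by omega)).symm])
  have hL1 : 1 ≤ L := by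
    have : 1 ≤ 2 ^ (k + 1) := Nat.one_le_two_pow
    omega
  omega
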